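/- A subset S ⊆ ℤ is of the form w(ℤ_{≤a}) for some element w of the affine symmetric group Ŝₙ and some integer a if and only if: (1) b ∈ S implies b − n ∈ S; (2) S ∩ ℤ_{>0} is finite; and (3) ℤ_{<0} \ S is finite. -/

import Mathlib

private lemma shift_mul (w : ℤ ≃ ℤ) (n : ℕ) (h : ∀ x : ℤ, w (x + n) = w x + n) :
    ∀ (k x : ℤ), w (x + n * k) = w x + n * k := by
  have hneg : ∀ x : ℤ, w (x - n) = w x - n := by
    intro x
    have := h (x - n)
    rw [sub_add_cancel] at this
    omega
  intro k
  induction k using Int.induction_on with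
  | zero => simp
  | succ k ih =>
    intro x
    have h1 := h (x + n * k)
    have h2 := ih x
    have : x + n * (k + 1) = x + n * k + n := by ring
    rw [this, h1, h2]; ring
  | pred k ih =>
    intro x
    have h1 := hneg (x + n * (-k))
    have h2 := ih x
    have h3 : x + (n:ℤ) * (-(k:ℤ) - 1) = x + n * (-k : ℤ) - n := by ring
    rw [h3, h1, h2]; ring

private lemma fwd (n : ℕ) (hn : 2 ≤ n) (S : Set ℤ) (w : ℤ ≃ ℤ) (a : ℤ)
    (hc : ∀ x : ℤ, w (x + n) = w x + n) (hS : S = w '' Set.Iic a) :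
    (∀ b ∈ S, b - (n : ℤ) ∈ S) ∧ (S ∩ Set.Ioi (0 : ℤ)).Finite ∧
        (Set.Iio (0 : ℤ) \ S).Finite := by
  have hnpos : (0:ℤ) < n := by exact_mod_cast Nat.lt_of_lt_of_le Nat.zero_lt_two hn
  have hmul := shift_mul w n hc
  -- displacement is periodic
  have hdisp : ∀ x : ℤ, w x - x = w (x % n) - (x % n) := by
    intro x
    have h1 : x = x % n + n * (x / n) := by
      have := Int.mul_ediv_add_emod x n; omega
    calc w x - x = w (x % n + n * (x / n)) - x := by rw [← h1]
      _ = w (x % n) + n * (x / n) - x := by rw [hmul]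
      _ = w (x % n) - (x % n) := by omega
  set C : ℤ := ∑ i ∈ Finset.Icc (0:ℤ) ((n:ℤ) - 1), |w i - i| with hC
  have hbound : ∀ x : ℤ, |w x - x| ≤ C := by
    intro x
    rw [hdisp x]
    refine Finset.single_le_sum (f := fun i => |w i - i|) (fun i _ => abs_nonneg _) ?_
    rw [Finset.mem_Icc]
    exact ⟨Int.emod_nonneg x (by omega), by have := Int.emod_lt_of_pos x hnpos; omega⟩
  refine ⟨?_, ?_, ?_⟩
  · intro b hb
    rw [hS] at hb ⊢
    obtain ⟨x, hx, rfl⟩ := hb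
    refine ⟨x - n, by simp at hx ⊢; omega, ?_⟩
    have := hc (x - n)
    rw [sub_add_cancel] at this
    omega
  · apply Set.Finite.subset (Set.finite_Ioc (0:ℤ) (a + C))
    rintro y ⟨hyS, hy0⟩
    rw [hS] at hyS
    obtain ⟨x, hx, rfl⟩ := hyS
    have := hbound x
    simp only [Set.mem_Iic] at hx
    constructor
    · exact hy0
    · have : |w x - x| ≤ C := hbound x
      have := abs_le.mp this
      omega
  · apply Set.Finite.subset (Set.Finite.image w (Set.finite_Ioc a C))
    rintro y ⟨hy0, hyS⟩
    simp only [Set.mem_Iio] at hy0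
    refine ⟨w.symm y, ?_, by simp⟩
    have hwy : w (w.symm y) = y := w.apply_symm_apply y
    have hb := hbound (w.symm y)
    rw [hwy] at hb
    have hb' := abs_le.mp hb
    have hxa : a < w.symm y := by
      by_contra hle
      exact hyS (hS ▸ ⟨w.symm y, by simpa using not_lt.mp hle, hwy⟩)
    exact ⟨hxa, by omega⟩


private lemma shift_sum (n : ℕ) (hn : 1 ≤ n) (f : ℤ → ℤ) (hf : ∀ x, f (x + n) = f x) :
    ∀ t : ℤ, ∑ i ∈ Finset.Icc (1:ℤ) n, f (i + t) = ∑ i ∈ Finset.Icc (1:ℤ) n, f i := by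
  have hn' : (1:ℤ) ≤ n := by exact_mod_cast hn
  have key : ∀ t : ℤ, ∑ i ∈ Finset.Icc (1:ℤ) n, f (i + (t+1)) = ∑ i ∈ Finset.Icc (1:ℤ) n, f (i + t) := by
    intro t
    have h1 : ∑ i ∈ Finset.Icc (1:ℤ) n, f (i + (t+1)) = ∑ j ∈ Finset.Icc (2:ℤ) (n+1), f (j + t) := by
      rw [show Finset.Icc (2:ℤ) (n+1) = Finset.image (fun x => x + 1) (Finset.Icc (1:ℤ) n) by
            rw [Finset.image_add_right_Icc]; norm_num,
          Finset.sum_image (by intro x _ y _ h; simpa using h)]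
      apply Finset.sum_congr rfl
      intro x _; ring_nf
    rw [h1]
    have e1 : Finset.Icc (1:ℤ) (n+1) = insert (1:ℤ) (Finset.Icc (2:ℤ) (n+1)) := by
      ext x; simp only [Finset.mem_Icc, Finset.mem_insert]; omega
    have e2 : Finset.Icc (1:ℤ) (n+1) = insert ((n:ℤ)+1) (Finset.Icc (1:ℤ) n) := by
      ext x; simp only [Finset.mem_Icc, Finset.mem_insert]; omega
    have m1 : (1:ℤ) ∉ Finset.Icc (2:ℤ) (n+1) := by simp
    have m2 : ((n:ℤ)+1) ∉ Finset.Icc (1:ℤ) (n:ℤ) := by simp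
    have s1 : ∑ j ∈ Finset.Icc (1:ℤ) (n+1), f (j + t)
        = f (1 + t) + ∑ j ∈ Finset.Icc (2:ℤ) (n+1), f (j + t) := by
      rw [e1, Finset.sum_insert m1]
    have s2 : ∑ j ∈ Finset.Icc (1:ℤ) (n+1), f (j + t)
        = f ((n:ℤ)+1 + t) + ∑ j ∈ Finset.Icc (1:ℤ) n, f (j + t) := by
      rw [e2, Finset.sum_insert m2]
    have hper : f ((n:ℤ)+1+t) = f (1 + t) := by
      have := hf (1 + t); rw [← this]; ring_nf
    omega
  intro t
  induction t using Int.induction_on with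
  | zero => simp
  | succ k ih => rw [key k, ih]
  | pred k ih =>
    have := key (-(k:ℤ)-1)
    simp only [show (-(k:ℤ)-1)+1 = -(k:ℤ) by ring] at this
    rw [ih] at this
    exact this.symm


private lemma bwd (n : ℕ) (hn : 2 ≤ n) (S : Set ℤ)
    (h1 : ∀ b ∈ S, b - (n : ℤ) ∈ S) (h2 : (S ∩ Set.Ioi (0:ℤ)).Finite)
    (h3 : (Set.Iio (0:ℤ) \ S).Finite) :
    ∃ (w : ℤ ≃ ℤ) (a : ℤ),
        (∀ x : ℤ, w (x + n) = w x + n) ∧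
        (∑ i ∈ Finset.Icc (1 : ℤ) (n : ℤ), (w i - i)) = 0 ∧
        S = w '' Set.Iic a := by
  have hnpos : (0:ℤ) < n := by exact_mod_cast Nat.lt_of_lt_of_le Nat.zero_lt_two hn
  have hnne : (n:ℤ) ≠ 0 := by omega
  -- S is bounded above
  obtain ⟨B, hB⟩ := h2.bddAbove
  have hSub : ∀ y ∈ S, y ≤ max B 0 := by
    intro y hy
    rcases le_or_gt y 0 with h | h
    · omega
    · have := hB ⟨hy, h⟩; omega
  obtain ⟨L, hL⟩ := h3.bddBelow
  -- downward closure by steps of n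
  have hstep : ∀ c ∈ S, ∀ m : ℕ, c - n * m ∈ S := by
    intro c hc m
    induction m with
    | zero => simpa using hc
    | succ m ih =>
      have := h1 _ ih
      have he : c - (n:ℤ) * (m+1 : ℕ) = c - n * m - n := by push_cast; ring
      rw [he]; exact this
  -- each residue class has a greatest element of S, and S is downward closed in it
  have hg : ∀ r : ℤ, ∃ c, c % (n:ℤ) = r % n ∧ ∀ x : ℤ, x % (n:ℤ) = r % n → (x ∈ S ↔ x ≤ c) := by
    intro r
    have hinh : ∃ z, z ∈ S ∧ z % (n:ℤ) = r % n := by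
      set M : ℤ := |r % (n:ℤ)| + |L| + 1 with hM
      have hM0 : 0 ≤ M := by positivity
      have hnM : M ≤ (n:ℤ) * M := le_mul_of_one_le_left hM0 (by omega)
      have ha1 := le_abs_self (r % (n:ℤ))
      have ha2 := neg_abs_le L
      have ha3 := abs_nonneg L
      have ha4 := abs_nonneg (r % (n:ℤ))
      refine ⟨r % n - n * M, ?_, ?_⟩
      · by_contra hnotS
        have hlt0 : r % (n:ℤ) - n * M < 0 := by omega
        have := hL ⟨hlt0, hnotS⟩
        omega
      · rw [show r % (n:ℤ) - n * M = r % n + (n:ℤ) * (-M) by ring,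
          Int.add_mul_emod_self_left, Int.emod_emod_of_dvd _ dvd_rfl]
    obtain ⟨c, ⟨hcS, hcr⟩, hmax⟩ := Int.exists_greatest_of_bdd
        (P := fun z => z ∈ S ∧ z % (n:ℤ) = r % n) ⟨max B 0, fun z hz => hSub z hz.1⟩ hinh
    refine ⟨c, hcr, fun x hx => ⟨fun hxS => hmax x ⟨hxS, hx⟩, fun hxc => ?_⟩⟩
    have hdvd : (n:ℤ) ∣ c - x := by
      have hmeq : x ≡ c [ZMOD (n:ℤ)] := by
        show x % (n:ℤ) = c % n
        rw [hx, hcr]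
      exact hmeq.dvd
    obtain ⟨k, hk⟩ := hdvd
    have hk0 : 0 ≤ k := by nlinarith
    have hxe : x = c - (n:ℤ) * k.toNat := by rw [Int.toNat_of_nonneg hk0]; omega
    rw [hxe]
    exact hstep c hcS k.toNat
  choose g hg1 hg2 using hg
  -- the affine permutation (before translation)
  set v : ℤ → ℤ := fun x => g ((x - 1) % n) + n * ((x - 1) / n) + n with hv
  have hvmod : ∀ x : ℤ, v x % n = (x - 1) % n := by
    intro x
    have : v x = g ((x - 1) % n) + (n:ℤ) * ((x - 1) / n + 1) := by simp only [hv]; ring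
    rw [this, Int.add_mul_emod_self_left, hg1, Int.emod_emod_of_dvd _ dvd_rfl]
  have hvper : ∀ x : ℤ, v (x + n) = v x + n := by
    intro x
    simp only [hv]
    rw [show x + (n:ℤ) - 1 = (x - 1) + (n:ℤ) * 1 by ring,
      Int.add_mul_emod_self_left, Int.add_mul_ediv_left _ 1 hnne]
    ring
  -- explicit preimages
  have hcalc : ∀ y m : ℤ, y = g (y % n) + n * m → v (1 + y % n + n * (m - 1)) = y := by
    intro y m hy
    have he0 : 0 ≤ y % (n:ℤ) := Int.emod_nonneg y hnne
    have he1 : y % (n:ℤ) < n := Int.emod_lt_of_pos y hnpos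
    have harg : 1 + y % (n:ℤ) + n * (m - 1) - 1 = y % n + (n:ℤ) * (m - 1) := by ring
    simp only [hv, harg]
    rw [Int.add_mul_emod_self_left, Int.add_mul_ediv_left _ _ hnne,
      Int.emod_eq_of_lt he0 he1, Int.ediv_eq_zero_of_lt he0 he1]
    have hr : (n:ℤ) * (m - 1) = n * m - n := by ring
    linarith [hy, hr]
  have hdvdy : ∀ y : ℤ, (n:ℤ) ∣ y - g (y % n) := by
    intro y
    have : g (y % (n:ℤ)) ≡ y [ZMOD (n:ℤ)] := by
      show g (y % (n:ℤ)) % n = y % n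
      rw [hg1, Int.emod_emod_of_dvd _ dvd_rfl]
    exact this.dvd
  have hrep : ∀ y : ℤ, y = g (y % n) + (n:ℤ) * ((y - g (y % n)) / n) := by
    intro y
    have := Int.mul_ediv_cancel' (hdvdy y)
    omega
  -- image characterization
  have himg : ∀ y : ℤ, y ∈ S ↔ ∃ z ≤ (0:ℤ), v z = y := by
    intro y
    constructor
    · intro hy
      set m : ℤ := (y - g (y % n)) / n with hm
      have hyr := hrep y
      rw [← hm] at hyr
      have hyle : y ≤ g (y % n) := by
        refine (hg2 (y % n) y ?_).mp hy
        rw [Int.emod_emod_of_dvd _ dvd_rfl]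
      have hnm : (n:ℤ) * m ≤ 0 := by omega
      have hm0 : m ≤ 0 := by by_contra hc; push_neg at hc; nlinarith
      refine ⟨1 + y % n + n * (m - 1), ?_, hcalc y m hyr⟩
      have he1 : y % (n:ℤ) < n := Int.emod_lt_of_pos y hnpos
      have : (n:ℤ) * (m - 1) = n * m - n := by ring
      omega
    · rintro ⟨z, hz, rfl⟩
      have hq : (z - 1) / (n:ℤ) < 0 := Int.ediv_neg_of_neg_of_pos (by omega) hnpos
      have hle : v z ≤ g ((z - 1) % n) := by
        simp only [hv]
        nlinarith
      refine (hg2 ((z-1) % n) (v z) ?_).mpr hle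
      rw [hvmod, Int.emod_emod_of_dvd _ dvd_rfl]
  -- bijectivity
  have hinj : Function.Injective v := by
    intro x x' hxx
    have hm : (x - 1) % (n:ℤ) = (x' - 1) % n := by
      rw [← hvmod, ← hvmod, hxx]
    have hq : (x - 1) / (n:ℤ) = (x' - 1) / n := by
      have : (n:ℤ) * ((x-1)/n) = n * ((x'-1)/n) := by
        simp only [hv] at hxx
        rw [hm] at hxx
        omega
      exact mul_left_cancel₀ hnne this
    have e1 := Int.mul_ediv_add_emod (x - 1) (n:ℤ)
    have e2 := Int.mul_ediv_add_emod (x' - 1) (n:ℤ)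
    rw [hm, hq] at e1
    omega
  have hsurj : Function.Surjective v := by
    intro y
    exact ⟨1 + y % n + n * ((y - g (y % n)) / n - 1), hcalc y _ (hrep y)⟩
  set D : ℤ := ∑ i ∈ Finset.Icc (1:ℤ) (n:ℤ), (v i - i) with hD
  have hdvdD : (n:ℤ) ∣ D := by
    have hterm : (n:ℤ) ∣ ∑ i ∈ Finset.Icc (1:ℤ) (n:ℤ), (v i - (i - 1)) := by
      refine Finset.dvd_sum fun i _ => ?_
      have : (i - 1) ≡ v i [ZMOD (n:ℤ)] := (hvmod i).symm
      exact this.dvd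
    have hsplit : ∑ i ∈ Finset.Icc (1:ℤ) (n:ℤ), (v i - (i - 1))
        = D + ∑ i ∈ Finset.Icc (1:ℤ) (n:ℤ), 1 := by
      rw [hD, ← Finset.sum_add_distrib]
      exact Finset.sum_congr rfl fun i _ => by ring
    have hcard : ∑ i ∈ Finset.Icc (1:ℤ) (n:ℤ), (1:ℤ) = n := by
      rw [Finset.sum_const, Int.card_Icc]
      simp
    rw [hsplit, hcard] at hterm
    have := dvd_sub hterm (dvd_refl ((n:ℤ)))
    simpa using this
  set a : ℤ := D / n with ha
  set w : ℤ ≃ ℤ := (Equiv.subRight a).trans (Equiv.ofBijective v ⟨hinj, hsurj⟩) with hwdef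
  have hw : ∀ x : ℤ, w x = v (x - a) := by
    intro x
    simp [hwdef, Equiv.subRight]
    rfl
  refine ⟨w, a, ?_, ?_, ?_⟩
  · intro x
    rw [hw, hw, show x + (n:ℤ) - a = (x - a) + n by ring, hvper]
  · have hfper : ∀ x : ℤ, (fun x => v x - x) (x + (n:ℕ)) = (fun x => v x - x) x := by
      intro x; simp only; rw [hvper]; ring
    have hss := shift_sum n (by omega) (fun x => v x - x) hfper (-a)
    have hterm : ∀ i ∈ Finset.Icc (1:ℤ) (n:ℤ),
        w i - i = (fun x => v x - x) (i + (-a)) + (-a) := by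
      intro i _
      rw [hw]
      show v (i - a) - i = v (i + -a) - (i + -a) + -a
      rw [show i + -a = i - a by ring]; ring
    rw [Finset.sum_congr rfl hterm, Finset.sum_add_distrib, hss, Finset.sum_const,
      Int.card_Icc]
    have hcard : ((n:ℤ) + 1 - 1).toNat = n := by simp
    rw [hcard]
    have hmul := Int.mul_ediv_cancel' hdvdD
    have : (n:ℕ) • (-a) = (n:ℤ) * (-a) := by simp
    rw [this, mul_neg, ha]
    omega
  · ext y
    rw [himg y]
    constructor
    · rintro ⟨z, hz, rfl⟩
      exact ⟨z + a, by simpa using by omega, by rw [hw, show z + a - a = z by ring]⟩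
    · rintro ⟨x, hx, rfl⟩
      rw [hw]
      exact ⟨x - a, by simp at hx ⊢; omega, rfl⟩


/-- A subset `S ⊆ ℤ` equals `w(ℤ_{≤ a})` for some element `w` of the affine
symmetric group `Ŝₙ` (modeled as affine permutations of `ℤ`: bijections
commuting with the shift by `n` and with zero total displacement on a period)
and some integer `a`, if and only if: (1) `b ∈ S → b - n ∈ S`; (2) `S ∩ ℤ_{>0}`
is finite; (3) `ℤ_{<0} \ S` is finite. -/
theorem nice_subset_characterization (n : ℕ) (hn : 2 ≤ n) (S : Set ℤ) :
    (∃ (w : ℤ ≃ ℤ) (a : ℤ),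
        (∀ x : ℤ, w (x + n) = w x + n) ∧
        (∑ i ∈ Finset.Icc (1 : ℤ) (n : ℤ), (w i - i)) = 0 ∧
        S = w '' Set.Iic a)
    ↔ ((∀ b ∈ S, b - (n : ℤ) ∈ S) ∧ (S ∩ Set.Ioi (0 : ℤ)).Finite ∧
        (Set.Iio (0 : ℤ) \ S).Finite) := by
  constructor
  · rintro ⟨w, a, hc, -, hS⟩
    exact fwd n hn S w a hc hS
  · rintro ⟨h1, h2, h3⟩
    exact bwd n hn S h1 h2 h3
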